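/- For every m ≥ 2, the enhanced power graph of the dicyclic group Q_{4m} is isomorphic to the commuting graph of the dihedral group D_{2·2m}; an isomorphism is given by the vertex map h^i x^j ↦ a^i b^j. -/

import Mathlib

/-- The power graph of a group: distinct `x`, `y` are adjacent iff one is a power of the other. -/
def powerGraph (G : Type*) [Group G] : SimpleGraph G where
  Adj x y := x ≠ y ∧ ((∃ k : ℤ, x = y ^ k) ∨ (∃ k : ℤ, y = x ^ k))
  symm := by
    constructor
    rintro x y ⟨hne, h | h⟩
    · exact ⟨hne.symm, Or.inr h⟩
    · exact ⟨hne.symm, Or.inl h⟩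
  loopless := by constructor; rintro x ⟨hne, -⟩; exact hne rfl

/-- The commuting graph of a group: distinct `x`, `y` are adjacent iff they commute. -/
def commutingGraph (G : Type*) [Group G] : SimpleGraph G where
  Adj x y := x ≠ y ∧ x * y = y * x
  symm := by constructor; rintro x y ⟨hne, h⟩; exact ⟨hne.symm, h.symm⟩
  loopless := by constructor; rintro x ⟨hne, -⟩; exact hne rfl

/-- The enhanced power graph of a group: distinct `x`, `y` are adjacent iff `⟨x, y⟩` is cyclic. -/
def enhancedPowerGraph (G : Type*) [Group G] : SimpleGraph G where
  Adj x y := x ≠ y ∧ IsCyclic ↥(Subgroup.closure {x, y})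
  symm := by constructor; rintro x y ⟨hne, h⟩; rw [Set.pair_comm] at h; exact ⟨hne.symm, h⟩
  loopless := by constructor; rintro x ⟨hne, -⟩; exact hne rfl


namespace Stmt18Aux

variable {G : Type*} [Group G]

lemma isCyclic_zpowers (g : G) : IsCyclic (Subgroup.zpowers g) := by
  refine ⟨⟨⟨g, Subgroup.mem_zpowers g⟩, fun x => ?_⟩⟩
  obtain ⟨k, hk⟩ := Subgroup.mem_zpowers_iff.mp x.2
  exact ⟨k, Subtype.ext (by simpa using hk)⟩

lemma isCyclic_closure_pair {x y g : G} (hx : x ∈ Subgroup.zpowers g)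
    (hy : y ∈ Subgroup.zpowers g) : IsCyclic (Subgroup.closure ({x, y} : Set G)) := by
  haveI := isCyclic_zpowers g
  exact Subgroup.isCyclic_of_le (by
    rw [Subgroup.closure_le]
    exact Set.insert_subset hx (Set.singleton_subset_iff.2 hy))

lemma commute_of_isCyclic_closure {x y : G}
    (h : IsCyclic (Subgroup.closure ({x, y} : Set G))) : x * y = y * x := by
  obtain ⟨g, hg⟩ := h.exists_generator
  have hx : x ∈ Subgroup.closure ({x, y} : Set G) :=
    Subgroup.subset_closure (Set.mem_insert _ _)
  have hy : y ∈ Subgroup.closure ({x, y} : Set G) :=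
    Subgroup.subset_closure (Set.mem_insert_of_mem _ rfl)
  obtain ⟨i, hi⟩ := Subgroup.mem_zpowers_iff.mp (hg ⟨x, hx⟩)
  obtain ⟨j, hj⟩ := Subgroup.mem_zpowers_iff.mp (hg ⟨y, hy⟩)
  have hi' : (g : G) ^ i = x := by simpa using congrArg Subtype.val hi
  have hj' : (g : G) ^ j = y := by simpa using congrArg Subtype.val hj
  have hcomm : (g : G) ^ i * (g : G) ^ j = (g : G) ^ j * (g : G) ^ i := by
    rw [← zpow_add, ← zpow_add, add_comm]
  rw [hi', hj'] at hcomm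
  exact hcomm

lemma two_mul_eq_zero_iff (m : ℕ) (hm : 1 ≤ m) (i : ZMod (2 * m)) :
    2 * i = 0 ↔ i = 0 ∨ i = (m : ZMod (2 * m)) := by
  haveI : NeZero (2 * m) := ⟨by omega⟩
  constructor
  · intro h
    have hc : ((2 * i.val : ℕ) : ZMod (2 * m)) = 2 * i := by
      push_cast [ZMod.natCast_zmod_val]
      ring
    have hdvd : (2 * m : ℕ) ∣ 2 * i.val := by
      rw [← ZMod.natCast_eq_zero_iff]
      rw [hc, h]
    obtain ⟨c, hcc⟩ := hdvd
    have hval : i.val = m * c :=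
      Nat.eq_of_mul_eq_mul_left (show 0 < 2 by norm_num)
        (show 2 * i.val = 2 * (m * c) by rw [hcc]; ring)
    have hlt : i.val < 2 * m := ZMod.val_lt i
    have hc2 : c < 2 := by
      by_contra hcon
      push_neg at hcon
      have : m * 2 ≤ m * c := Nat.mul_le_mul_left _ hcon
      omega
    have : i.val = 0 ∨ i.val = m := by
      interval_cases c <;> omega
    rcases this with h0 | h0
    · left
      have := ZMod.natCast_zmod_val i
      rw [h0] at this
      simpa using this.symm
    · right
      have := ZMod.natCast_zmod_val i
      rw [h0] at this
      exact this.symm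
  · have h2m : ((2 * m : ℕ) : ZMod (2 * m)) = 0 := ZMod.natCast_self _
    push_cast at h2m
    rintro (rfl | rfl)
    · simp
    · linear_combination h2m

end Stmt18Aux
section QuatAux
open QuaternionGroup DihedralGroup Subgroup Stmt18Aux

namespace Stmt18Aux2
variable {m : ℕ}

lemma a_mem_zpowers_a_one (i : ZMod (2 * m)) [NeZero m] :
    (a i : QuaternionGroup m) ∈ zpowers (a 1) := by
  haveI : NeZero (2 * m) := ⟨by have := NeZero.pos m; omega⟩
  refine mem_zpowers_iff.mpr ⟨(i.val : ℤ), ?_⟩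
  rw [zpow_natCast, a_one_pow, ZMod.natCast_zmod_val]

lemma neg_m_eq (hm : 0 < m) : -((m : ZMod (2 * m))) = (m : ZMod (2 * m)) := by
  have h2m : ((2 * m : ℕ) : ZMod (2 * m)) = 0 := ZMod.natCast_self _
  push_cast at h2m
  linear_combination -h2m

lemma a_m_mem (hm : 0 < m) (j : ZMod (2 * m)) :
    (a (m : ZMod (2 * m)) : QuaternionGroup m) ∈ zpowers (xa j) :=
  mem_zpowers_iff.mpr ⟨2, by rw [zpow_two, xa_mul_xa]; congr 1; ring⟩

lemma xa_add_m_mem (hm : 0 < m) (i : ZMod (2 * m)) :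
    (xa (i + m) : QuaternionGroup m) ∈ zpowers (xa i) := by
  refine mem_zpowers_iff.mpr ⟨3, ?_⟩
  have : (xa i : QuaternionGroup m) ^ (3 : ℤ) = xa i ^ 2 * xa i := by
    rw [show (3:ℤ) = 2 + 1 by norm_num, zpow_add, zpow_two, zpow_one, pow_two]
  rw [this, xa_sq, a_mul_xa]
  congr 1
  rw [sub_eq_add_neg, neg_m_eq hm]

lemma key_ax (hm : 0 < m) (i j : ZMod (2 * m)) :
    IsCyclic (closure ({a i, xa j} : Set (QuaternionGroup m))) ↔ 2 * i = 0 := by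
  constructor
  · intro h
    have hcomm := commute_of_isCyclic_closure h
    rw [a_mul_xa, xa_mul_a] at hcomm
    have : j - i = j + i := by injection hcomm
    linear_combination -this
  · intro h
    rcases (two_mul_eq_zero_iff m hm i).mp h with rfl | rfl
    · exact isCyclic_closure_pair (show (a 0 : QuaternionGroup m) ∈ zpowers (xa j) from
        (QuaternionGroup.one_def (n := m)) ▸ (zpowers (xa j)).one_mem) (mem_zpowers _)
    · exact isCyclic_closure_pair (a_m_mem hm j) (mem_zpowers _)

lemma key_xx (hm : 0 < m) (i j : ZMod (2 * m)) :
    IsCyclic (closure ({xa i, xa j} : Set (QuaternionGroup m))) ↔ 2 * (j - i) = 0 := by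
  constructor
  · intro h
    have hcomm := commute_of_isCyclic_closure h
    rw [xa_mul_xa, xa_mul_xa] at hcomm
    have : (m : ZMod (2*m)) + j - i = (m : ZMod (2*m)) + i - j := by injection hcomm
    linear_combination this
  · intro h
    rcases (two_mul_eq_zero_iff m hm (j - i)).mp h with h0 | h0
    · have : j = i := by linear_combination h0
      subst this
      exact isCyclic_closure_pair (mem_zpowers (xa j)) (mem_zpowers _)
    · have : j = i + m := by linear_combination h0
      subst this
      exact isCyclic_closure_pair (mem_zpowers (xa i)) (xa_add_m_mem hm i)

end Stmt18Aux2

end QuatAux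
open QuaternionGroup DihedralGroup in
/-- The vertex bijection `a i ↦ r i`, `xa i ↦ sr i`. -/
def qdEquiv (m : ℕ) : QuaternionGroup m ≃ DihedralGroup (2 * m) where
  toFun x := match x with
    | .a i => .r i
    | .xa i => .sr i
  invFun x := match x with
    | .r i => .a i
    | .sr i => .xa i
  left_inv := by rintro (i | i) <;> rfl
  right_inv := by rintro (i | i) <;> rfl

open QuaternionGroup DihedralGroup in
/-- For m ≥ 2, the enhanced power graph of the dicyclic group `Q_{4m}` is isomorphic to
the commuting graph of `D_{2·2m}`, via the vertex map `h^i x^j ↦ a^i b^j`. -/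
theorem stmt18 (m : ℕ) (hm : 2 ≤ m) :
    ∃ e : enhancedPowerGraph (QuaternionGroup m) ≃g commutingGraph (DihedralGroup (2 * m)),
      (∀ i : ZMod (2 * m), e (a i) = r i) ∧
        (∀ i : ZMod (2 * m), e (a i * xa 0) = r i * sr 0) := by
  have hm0 : 0 < m := by omega
  haveI : NeZero m := ⟨by omega⟩
  refine ⟨⟨qdEquiv m, ?_⟩, fun i => rfl, fun i => rfl⟩
  rintro (i | i) (j | j)
  · -- a i, a j
    show (r i ≠ r j ∧ r i * r j = r j * r i) ↔
      (a i ≠ a j ∧ IsCyclic (Subgroup.closure ({a i, a j} : Set (QuaternionGroup m))))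
    constructor
    · rintro ⟨hne, -⟩
      refine ⟨by simpa using hne, ?_⟩
      exact Stmt18Aux.isCyclic_closure_pair (Stmt18Aux2.a_mem_zpowers_a_one i)
        (Stmt18Aux2.a_mem_zpowers_a_one j)
    · rintro ⟨hne, -⟩
      refine ⟨by simpa using hne, ?_⟩
      rw [r_mul_r, r_mul_r, add_comm]
  · -- a i, xa j
    show (r i ≠ sr j ∧ r i * sr j = sr j * r i) ↔
      (a i ≠ xa j ∧ IsCyclic (Subgroup.closure ({a i, xa j} : Set (QuaternionGroup m))))
    rw [r_mul_sr, sr_mul_r]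
    constructor
    · rintro ⟨-, hc⟩
      refine ⟨by simp, (Stmt18Aux2.key_ax hm0 i j).mpr ?_⟩
      have : j - i = j + i := by injection hc
      linear_combination -this
    · rintro ⟨-, hc⟩
      refine ⟨by simp, ?_⟩
      have h2 := (Stmt18Aux2.key_ax hm0 i j).mp hc
      congr 1
      linear_combination -h2
  · -- xa i, a j
    show (sr i ≠ r j ∧ sr i * r j = r j * sr i) ↔
      (xa i ≠ a j ∧ IsCyclic (Subgroup.closure ({xa i, a j} : Set (QuaternionGroup m))))
    rw [sr_mul_r, r_mul_sr, Set.pair_comm]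
    constructor
    · rintro ⟨-, hc⟩
      refine ⟨by simp, (Stmt18Aux2.key_ax hm0 j i).mpr ?_⟩
      have : i + j = i - j := by injection hc
      linear_combination this
    · rintro ⟨-, hc⟩
      refine ⟨by simp, ?_⟩
      have h2 := (Stmt18Aux2.key_ax hm0 j i).mp hc
      congr 1
      linear_combination h2
  · -- xa i, xa j
    show (sr i ≠ sr j ∧ sr i * sr j = sr j * sr i) ↔
      (xa i ≠ xa j ∧ IsCyclic (Subgroup.closure ({xa i, xa j} : Set (QuaternionGroup m))))
    rw [sr_mul_sr, sr_mul_sr]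
    constructor
    · rintro ⟨hne, hc⟩
      refine ⟨by simpa using hne, (Stmt18Aux2.key_xx hm0 i j).mpr ?_⟩
      have : j - i = i - j := by injection hc
      linear_combination this
    · rintro ⟨hne, hc⟩
      refine ⟨by simpa using hne, ?_⟩
      have h2 := (Stmt18Aux2.key_xx hm0 i j).mp hc
      congr 1
      linear_combination h2
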